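/- Let γ ∈ [0,1] and α > 0, and define for x ∈ Ω and ξ ∈ ∂Ω the kernel F(x,ξ) := d(x)^{1−γ} d_Σ(x)^{α} |x−ξ|^{−N}. Then there exists a constant C > 0, depending only on N, α, γ and diam(Ω), such that for every ξ ∈ ∂Ω and every λ > 0, ∫_{{x ∈ Ω : F(x,ξ) > λ}} d(x) d_Σ(x)^{−α} dx ≤ C λ^{−(N+1)/(N−1+γ)}. -/

import Mathlib

open MeasureTheory Set Metric

lemma ball_rpow_bound {N : ℕ} (hN : 1 ≤ N) {s : ℝ} (hs : 0 < s) (hsN : s < N)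
    (ξ : EuclideanSpace ℝ (Fin N)) {R : ℝ} (hR : 0 < R) :
    ∫⁻ x in ball ξ R, ENNReal.ofReal (dist x ξ ^ (-s)) ≤
      ENNReal.ofReal ((2:ℝ) ^ s) * (1 - ENNReal.ofReal ((2:ℝ) ^ (-((N:ℝ) - s))))⁻¹ *
        volume (ball (0 : EuclideanSpace ℝ (Fin N)) 1) * ENNReal.ofReal (R ^ ((N:ℝ) - s)) := by
  haveI : Nonempty (Fin N) := ⟨⟨0, by omega⟩⟩
  set V := volume (ball (0 : EuclideanSpace ℝ (Fin N)) 1) with hV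
  set q : ℝ := (2:ℝ) ^ (-((N:ℝ) - s)) with hq
  have hq0 : 0 ≤ q := Real.rpow_nonneg (by norm_num) _
  set A : ℕ → Set (EuclideanSpace ℝ (Fin N)) :=
    fun k => ball ξ (R / 2 ^ k) \ ball ξ (R / 2 ^ (k + 1)) with hA
  have hcover : ball ξ R ⊆ {ξ} ∪ ⋃ k, A k := by
    intro x hx
    rcases eq_or_ne x ξ with h | h
    · exact Or.inl (by simp [h])
    · have hd : 0 < dist x ξ := dist_pos.2 h
      have hex : ∃ k : ℕ, R / 2 ^ (k + 1) ≤ dist x ξ := by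
        obtain ⟨k, hk⟩ := exists_nat_gt (R / dist x ξ)
        refine ⟨k, ?_⟩
        rw [div_le_iff₀ (by positivity)]
        have h2 : (k : ℝ) < 2 ^ (k + 1) := by
          calc (k : ℝ) < 2 ^ k := by exact_mod_cast Nat.lt_two_pow_self (n := k)
            _ ≤ 2 ^ (k + 1) := by
                apply pow_le_pow_right₀ (by norm_num) (Nat.le_succ k)
        have h3 : R / dist x ξ < 2 ^ (k + 1) := lt_trans hk h2
        calc R = (R / dist x ξ) * dist x ξ := by field_simp
          _ ≤ 2 ^ (k + 1) * dist x ξ := by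
              exact mul_le_mul_of_nonneg_right h3.le dist_nonneg
          _ = dist x ξ * 2 ^ (k + 1) := by ring
      classical
      set k := Nat.find hex with hkdef
      have hk1 : R / 2 ^ (k + 1) ≤ dist x ξ := Nat.find_spec hex
      have hk2 : dist x ξ < R / 2 ^ k := by
        rcases Nat.eq_zero_or_pos k with h0 | h0
        · rw [h0]; simpa using (mem_ball.1 hx)
        · obtain ⟨m, hm⟩ := Nat.exists_eq_succ_of_ne_zero h0.ne'
          have hmin := Nat.find_min hex (hm ▸ Nat.lt_succ_self m)
          push_neg at hmin
          rw [hm]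
          exact hmin
      exact Or.inr (mem_iUnion.2 ⟨k, mem_ball.2 hk2,
        fun hmem => absurd (mem_ball.1 hmem) (not_lt.2 hk1)⟩)
  have hterm : ∀ k : ℕ, ∫⁻ x in A k, ENNReal.ofReal (dist x ξ ^ (-s)) ≤
      (ENNReal.ofReal ((2:ℝ) ^ s * R ^ ((N:ℝ) - s)) * V) * ENNReal.ofReal q ^ k := by
    intro k
    have hr1 : (0:ℝ) < R / 2 ^ (k + 1) := by positivity
    have hb : ∀ x ∈ A k, ENNReal.ofReal (dist x ξ ^ (-s)) ≤
        ENNReal.ofReal ((R / 2 ^ (k + 1)) ^ (-s)) := by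
      intro x hx
      have hge : R / 2 ^ (k + 1) ≤ dist x ξ := by
        by_contra h
        push_neg at h
        exact hx.2 (mem_ball.2 h)
      exact ENNReal.ofReal_le_ofReal
        (Real.rpow_le_rpow_of_nonpos hr1 hge (neg_nonpos.2 hs.le))
    have hAm : MeasurableSet (A k) := measurableSet_ball.diff measurableSet_ball
    have e1 : ∀ (m : ℕ) (y : ℝ),
        (R / 2 ^ m : ℝ) ^ y = Real.exp ((Real.log R - m * Real.log 2) * y) := by
      intro m y
      rw [Real.rpow_def_of_pos (by positivity), Real.log_div hR.ne' (by positivity),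
        Real.log_pow]
    have key : (R / 2 ^ (k + 1)) ^ (-s) * (R / 2 ^ k : ℝ) ^ (N : ℕ) =
        (2:ℝ) ^ s * R ^ ((N:ℝ) - s) * q ^ k := by
      rw [← Real.rpow_natCast (R / 2 ^ k) N, e1, e1, ← Real.rpow_natCast q k, hq,
        ← Real.rpow_mul (by norm_num : (0:ℝ) ≤ 2),
        Real.rpow_def_of_pos (by norm_num : (0:ℝ) < 2),
        Real.rpow_def_of_pos (by norm_num : (0:ℝ) < 2),
        Real.rpow_def_of_pos hR, ← Real.exp_add, ← Real.exp_add, ← Real.exp_add]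
      congr 1
      push_cast
      ring
    calc ∫⁻ x in A k, ENNReal.ofReal (dist x ξ ^ (-s))
        ≤ ∫⁻ _x in A k, ENNReal.ofReal ((R / 2 ^ (k + 1)) ^ (-s)) :=
          setLIntegral_mono' hAm hb
      _ = ENNReal.ofReal ((R / 2 ^ (k + 1)) ^ (-s)) * volume (A k) :=
          setLIntegral_const _ _
      _ ≤ ENNReal.ofReal ((R / 2 ^ (k + 1)) ^ (-s)) * volume (ball ξ (R / 2 ^ k)) := by
          exact mul_le_mul_right (measure_mono diff_subset) _
      _ = ENNReal.ofReal ((R / 2 ^ (k + 1)) ^ (-s)) *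
            (ENNReal.ofReal ((R / 2 ^ k) ^ Module.finrank ℝ (EuclideanSpace ℝ (Fin N))) * V) := by
          rw [Measure.addHaar_ball volume ξ (by positivity : (0:ℝ) ≤ R / 2 ^ k)]
      _ = (ENNReal.ofReal ((2:ℝ) ^ s * R ^ ((N:ℝ) - s)) * V) * ENNReal.ofReal q ^ k := by
          rw [finrank_euclideanSpace_fin, ← mul_assoc,
            ← ENNReal.ofReal_mul (by positivity), key, ← ENNReal.ofReal_pow hq0,
            ENNReal.ofReal_mul (by positivity)]
          ring
  calc ∫⁻ x in ball ξ R, ENNReal.ofReal (dist x ξ ^ (-s))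
      ≤ ∫⁻ x in {ξ} ∪ ⋃ k, A k, ENNReal.ofReal (dist x ξ ^ (-s)) :=
        lintegral_mono_set hcover
    _ ≤ (∫⁻ x in {ξ}, ENNReal.ofReal (dist x ξ ^ (-s))) +
        ∫⁻ x in ⋃ k, A k, ENNReal.ofReal (dist x ξ ^ (-s)) := lintegral_union_le _ _ _
    _ ≤ 0 + ∑' k, ∫⁻ x in A k, ENNReal.ofReal (dist x ξ ^ (-s)) := by
        gcongr
        · rw [lintegral_singleton]
          simp [Real.zero_rpow (neg_ne_zero.2 hs.ne')]
        · exact lintegral_iUnion_le _ _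
    _ ≤ 0 + ∑' k, (ENNReal.ofReal ((2:ℝ) ^ s * R ^ ((N:ℝ) - s)) * V) * ENNReal.ofReal q ^ k := by
        gcongr with k
        exact hterm k
    _ = (ENNReal.ofReal ((2:ℝ) ^ s * R ^ ((N:ℝ) - s)) * V) * (1 - ENNReal.ofReal q)⁻¹ := by
        rw [zero_add, ENNReal.tsum_mul_left, ENNReal.tsum_geometric]
    _ = ENNReal.ofReal ((2:ℝ) ^ s) * (1 - ENNReal.ofReal q)⁻¹ * V *
          ENNReal.ofReal (R ^ ((N:ℝ) - s)) := by
        rw [ENNReal.ofReal_mul (by positivity)]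
        ring

/-- Level-set estimate for the Martin-type kernel
`F(x,ξ) = d(x)^{1−γ} d_Σ(x)^{α} |x−ξ|^{−N}` against the weight `d(x) d_Σ(x)^{−α}`. -/
theorem stmt_4 {N : ℕ} (hN : 3 ≤ N) (Ω S : Set (EuclideanSpace ℝ (Fin N)))
    (hΩo : IsOpen Ω) (hΩb : Bornology.IsBounded Ω)
    (hS : S ⊆ frontier Ω) (hSne : S.Nonempty) (hSc : IsCompact S)
    (γ α : ℝ) (hγ0 : 0 ≤ γ) (hγ1 : γ ≤ 1) (hα : 0 < α) :
    ∃ C > 0, ∀ ξ ∈ frontier Ω, ∀ l : ℝ, 0 < l →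
      ∫⁻ x in {x ∈ Ω |
          l < infDist x (frontier Ω) ^ (1 - γ) * infDist x S ^ α * dist x ξ ^ (-(N : ℝ))},
        ENNReal.ofReal (infDist x (frontier Ω) * infDist x S ^ (-α)) ≤
      ENNReal.ofReal (C * l ^ (-(((N : ℝ) + 1) / ((N : ℝ) - 1 + γ)))) := by
  haveI : Nonempty (Fin N) := ⟨⟨0, by omega⟩⟩
  have hN3 : (3:ℝ) ≤ (N:ℝ) := by exact_mod_cast hN
  set D : ℝ := Metric.diam Ω + 1 with hD
  have hD0 : 0 < D := by positivity
  set β : ℝ := (N:ℝ) - 1 + γ with hβdef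
  have hβ : 0 < β := by rw [hβdef]; linarith
  set s : ℝ := (N:ℝ) - 2 + γ with hsdef
  have hs : 0 < s := by rw [hsdef]; linarith
  have hsN : s < (N:ℝ) := by rw [hsdef]; linarith
  have hNs : (N:ℝ) - s = 2 - γ := by rw [hsdef]; ring
  set V := volume (ball (0 : EuclideanSpace ℝ (Fin N)) 1) with hV
  set q : ℝ := (2:ℝ) ^ (-((N:ℝ) - s)) with hq
  set K : ENNReal := ENNReal.ofReal ((2:ℝ) ^ s) * (1 - ENNReal.ofReal q)⁻¹ * V with hK
  have hVtop : V ≠ ⊤ := measure_ball_lt_top.ne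
  have hq1 : q < 1 := by
    rw [hq]
    exact Real.rpow_lt_one_of_one_lt_of_neg (by norm_num) (by rw [hNs]; linarith)
  have hKtop : K ≠ ⊤ := by
    refine ENNReal.mul_ne_top (ENNReal.mul_ne_top ENNReal.ofReal_ne_top ?_) hVtop
    rw [Ne, ENNReal.inv_eq_top]
    exact (tsub_pos_of_lt (ENNReal.ofReal_lt_one.2 hq1)).ne'
  refine ⟨K.toReal * (D ^ α) ^ ((2 - γ) / β) + 1, by positivity, ?_⟩
  intro ξ hξ l hl
  set R : ℝ := (D ^ α / l) ^ β⁻¹ with hRdef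
  have hR0 : 0 < R := Real.rpow_pos_of_pos (by positivity) _
  set E := {x ∈ Ω |
      l < infDist x (frontier Ω) ^ (1 - γ) * infDist x S ^ α * dist x ξ ^ (-(N : ℝ))} with hE
  have hfacts : ∀ x ∈ E, dist x ξ < R ∧
      infDist x (frontier Ω) * infDist x S ^ (-α) ≤
        dist x ξ * (dist x ξ ^ (1 - γ) * dist x ξ ^ (-(N:ℝ))) / l := by
    intro x hx
    obtain ⟨hxΩ, hlt⟩ := hx
    set d := infDist x (frontier Ω) with hd
    set t := infDist x S with ht
    set r := dist x ξ with hr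
    have hd0 : 0 ≤ d := infDist_nonneg
    have ht0 : 0 ≤ t := infDist_nonneg
    have hdr : d ≤ r := infDist_le_dist_of_mem hξ
    have htD : t ≤ D := by
      obtain ⟨σ, hσ⟩ := hSne
      have h1 : t ≤ dist x σ := infDist_le_dist_of_mem hσ
      have h2 : dist x σ ≤ Metric.diam Ω := by
        have hσc : σ ∈ closure Ω := frontier_subset_closure (hS hσ)
        have h3 := Metric.dist_le_diam_of_mem hΩb.closure (subset_closure hxΩ) hσc
        rwa [Metric.diam_closure] at h3
      rw [hD]; linarith
    have hr0 : 0 < r := by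
      by_contra hc
      push_neg at hc
      have h0 : r = 0 := le_antisymm hc dist_nonneg
      rw [h0, Real.zero_rpow (by intro hc2; nlinarith : (-(N:ℝ)) ≠ 0), mul_zero] at hlt
      linarith
    have ht0' : 0 < t := by
      by_contra hc
      push_neg at hc
      have h0 : t = 0 := le_antisymm hc ht0
      rw [h0, Real.zero_rpow hα.ne', mul_zero, zero_mul] at hlt
      linarith
    have e1 : d ^ (1 - γ) ≤ r ^ (1 - γ) := Real.rpow_le_rpow hd0 hdr (by linarith)
    have e2 : t ^ α ≤ D ^ α := Real.rpow_le_rpow ht0 htD hα.le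
    constructor
    · have h1 : l < r ^ (1 - γ) * D ^ α * r ^ (-(N:ℝ)) := by
        refine hlt.trans_le ?_
        have := mul_le_mul e1 e2 (Real.rpow_nonneg ht0 α) (Real.rpow_nonneg (by positivity) _)
        exact mul_le_mul_of_nonneg_right this (Real.rpow_nonneg dist_nonneg _)
      have hexp : (1 - γ) + -(N:ℝ) = -β := by rw [hβdef]; ring
      have h2 : r ^ (1 - γ) * D ^ α * r ^ (-(N:ℝ)) = D ^ α * r ^ (-β) := by
        calc r ^ (1 - γ) * D ^ α * r ^ (-(N:ℝ))
            = D ^ α * (r ^ (1 - γ) * r ^ (-(N:ℝ))) := by ring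
          _ = D ^ α * r ^ ((1 - γ) + -(N:ℝ)) := by rw [← Real.rpow_add hr0]
          _ = D ^ α * r ^ (-β) := by rw [hexp]
      have h4 : l * r ^ β < D ^ α := by
        have h5 := mul_lt_mul_of_pos_right (h1.trans_eq h2) (Real.rpow_pos_of_pos hr0 β)
        rwa [mul_assoc, ← Real.rpow_add hr0, neg_add_cancel, Real.rpow_zero, mul_one] at h5
      have h3 : r ^ β < D ^ α / l := (lt_div_iff₀ hl).2 (by linarith [mul_comm l (r ^ β)])
      have h6 := Real.rpow_lt_rpow (Real.rpow_nonneg hr0.le β) h3 (inv_pos.2 hβ)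
      rwa [Real.rpow_rpow_inv hr0.le hβ.ne'] at h6
    · have h5 : l * t ^ (-α) < d ^ (1 - γ) * r ^ (-(N:ℝ)) := by
        have h7 := mul_lt_mul_of_pos_right hlt (Real.rpow_pos_of_pos ht0' (-α))
        calc l * t ^ (-α) < d ^ (1 - γ) * t ^ α * r ^ (-(N:ℝ)) * t ^ (-α) := h7
          _ = d ^ (1 - γ) * r ^ (-(N:ℝ)) * (t ^ α * t ^ (-α)) := by ring
          _ = d ^ (1 - γ) * r ^ (-(N:ℝ)) := by
              rw [← Real.rpow_add ht0', add_neg_cancel, Real.rpow_zero, mul_one]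
      have h6 : t ^ (-α) ≤ d ^ (1 - γ) * r ^ (-(N:ℝ)) / l := by
        rw [le_div_iff₀ hl]
        linarith [mul_comm l (t ^ (-α))]
      calc d * t ^ (-α) ≤ d * (d ^ (1 - γ) * r ^ (-(N:ℝ)) / l) :=
            mul_le_mul_of_nonneg_left h6 hd0
        _ ≤ r * (r ^ (1 - γ) * r ^ (-(N:ℝ)) / l) := by
            have hinner : d ^ (1 - γ) * r ^ (-(N:ℝ)) / l ≤ r ^ (1 - γ) * r ^ (-(N:ℝ)) / l := by
              have hnum : d ^ (1 - γ) * r ^ (-(N:ℝ)) ≤ r ^ (1 - γ) * r ^ (-(N:ℝ)) :=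
                mul_le_mul_of_nonneg_right e1 (Real.rpow_nonneg hr0.le _)
              have := mul_le_mul_of_nonneg_right hnum (inv_nonneg.2 hl.le)
              simpa [div_eq_mul_inv] using this
            exact mul_le_mul hdr hinner (by positivity) dist_nonneg
        _ = r * (r ^ (1 - γ) * r ^ (-(N:ℝ))) / l := by ring
  have hf : Measurable fun x : EuclideanSpace ℝ (Fin N) =>
      infDist x (frontier Ω) ^ (1 - γ) * infDist x S ^ α * dist x ξ ^ (-(N:ℝ)) := by
    have h1 : Continuous fun x : EuclideanSpace ℝ (Fin N) =>
        infDist x (frontier Ω) ^ (1 - γ) :=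
      (continuous_infDist_pt _).rpow_const fun x => Or.inr (by linarith)
    have h2 : Continuous fun x : EuclideanSpace ℝ (Fin N) => infDist x S ^ α :=
      (continuous_infDist_pt _).rpow_const fun x => Or.inr hα.le
    have h3 : Measurable fun x : EuclideanSpace ℝ (Fin N) => dist x ξ ^ (-(N:ℝ)) := by
      have heq : (fun x : EuclideanSpace ℝ (Fin N) => dist x ξ ^ (-(N:ℝ))) =
          fun x => (dist x ξ ^ (N:ℝ))⁻¹ := by
        funext x; rw [← Real.rpow_neg dist_nonneg]
      rw [heq]
      exact (((continuous_id.dist continuous_const).rpow_const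
        fun x => Or.inr (Nat.cast_nonneg N)).measurable).inv
    exact ((h1.mul h2).measurable).mul h3
  have hEm : MeasurableSet E := by
    have : E = Ω ∩ {x | l < infDist x (frontier Ω) ^ (1 - γ) * infDist x S ^ α *
        dist x ξ ^ (-(N:ℝ))} := by
      ext x; simp [hE, Set.mem_sep_iff, Set.mem_inter_iff]
    rw [this]
    exact hΩo.measurableSet.inter (measurableSet_lt measurable_const hf)
  calc ∫⁻ x in E, ENNReal.ofReal (infDist x (frontier Ω) * infDist x S ^ (-α))
      ≤ ∫⁻ x in E,
          ENNReal.ofReal (dist x ξ * (dist x ξ ^ (1 - γ) * dist x ξ ^ (-(N:ℝ))) / l) :=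
        setLIntegral_mono' hEm fun x hx => ENNReal.ofReal_le_ofReal (hfacts x hx).2
    _ ≤ ∫⁻ x in ball ξ R,
          ENNReal.ofReal (dist x ξ * (dist x ξ ^ (1 - γ) * dist x ξ ^ (-(N:ℝ))) / l) :=
        lintegral_mono_set fun x hx => mem_ball.2 (hfacts x hx).1
    _ = ∫⁻ x in ball ξ R, ENNReal.ofReal l⁻¹ * ENNReal.ofReal (dist x ξ ^ (-s)) := by
        apply lintegral_congr
        intro x
        rcases (dist_nonneg : 0 ≤ dist x ξ).lt_or_eq with h | h
        · have hne : (1:ℝ) + ((1 - γ) + -(N:ℝ)) ≠ 0 := by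
            rw [hsdef] at hs; intro hc; nlinarith
          have h7 : dist x ξ * (dist x ξ ^ (1 - γ) * dist x ξ ^ (-(N:ℝ))) =
              dist x ξ ^ (-s) := by
            rw [← Real.rpow_add h, ← Real.rpow_one_add' h.le hne,
              show (1:ℝ) + ((1 - γ) + -(N:ℝ)) = -s from by rw [hsdef]; ring]
          rw [h7, div_eq_mul_inv, ENNReal.ofReal_mul (Real.rpow_nonneg dist_nonneg _),
            mul_comm]
        · rw [← h]
          rw [Real.zero_rpow (neg_ne_zero.2 hs.ne'), zero_mul, zero_div]
          simp
    _ = ENNReal.ofReal l⁻¹ * ∫⁻ x in ball ξ R, ENNReal.ofReal (dist x ξ ^ (-s)) :=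
        lintegral_const_mul' _ _ ENNReal.ofReal_ne_top
    _ ≤ ENNReal.ofReal l⁻¹ * (K * ENNReal.ofReal (R ^ ((N:ℝ) - s))) := by
        gcongr
        exact ball_rpow_bound (by omega) hs hsN ξ hR0
    _ = ENNReal.ofReal (l⁻¹ * (K.toReal * R ^ ((N:ℝ) - s))) := by
        conv_lhs => rw [show K = ENNReal.ofReal K.toReal from
          (ENNReal.ofReal_toReal hKtop).symm]
        rw [← ENNReal.ofReal_mul ENNReal.toReal_nonneg,
          ← ENNReal.ofReal_mul (inv_nonneg.2 hl.le)]
    _ ≤ ENNReal.ofReal ((K.toReal * (D ^ α) ^ ((2 - γ) / β) + 1) *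
          l ^ (-(((N:ℝ) + 1) / β))) := by
        apply ENNReal.ofReal_le_ofReal
        have hR2 : R ^ ((N:ℝ) - s) = (D ^ α) ^ ((2 - γ) / β) * l ^ (-((2 - γ) / β)) := by
          rw [hNs, hRdef, ← Real.rpow_mul (le_of_lt (by positivity)),
            show β⁻¹ * (2 - γ) = (2 - γ) / β from by rw [div_eq_mul_inv]; ring,
            Real.div_rpow (by positivity) hl.le, div_eq_mul_inv, ← Real.rpow_neg hl.le]
        have hl2 : l⁻¹ * l ^ (-((2 - γ) / β)) = l ^ (-(((N:ℝ) + 1) / β)) := by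
          rw [← Real.rpow_neg_one l, ← Real.rpow_add hl]
          congr 1
          rw [hβdef]
          field_simp [show (N:ℝ) - 1 + γ ≠ 0 by linarith]
          ring
        calc l⁻¹ * (K.toReal * R ^ ((N:ℝ) - s))
            = (K.toReal * (D ^ α) ^ ((2 - γ) / β)) * (l⁻¹ * l ^ (-((2 - γ) / β))) := by
              rw [hR2]; ring
          _ = (K.toReal * (D ^ α) ^ ((2 - γ) / β)) * l ^ (-(((N:ℝ) + 1) / β)) := by
              rw [hl2]
          _ ≤ (K.toReal * (D ^ α) ^ ((2 - γ) / β) + 1) * l ^ (-(((N:ℝ) + 1) / β)) := by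
              apply mul_le_mul_of_nonneg_right (by linarith) (Real.rpow_nonneg hl.le _)
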